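/- Let n≥3 be odd, u ∈ F_{3^n}\F_3 with χ(u+1)≠χ(u-1), s²=1-u², φ=1+s. With g₁(z)=-(u+1)z, g₂(z)=z(z-1-u), g₃(z)=z(z-1+u), g₄(z)=z²-z+u², g₅(z)=-φ(z+1-s), we have ∑_{z∈F_{3^n}} χ(g₂g₃g₄g₅(z)) + ∑_{z∈F_{3^n}} χ(g₁g₂g₃g₄g₅(z)) = 2. -/

import Mathlib

open Finset

private def Ee {F : Type*} [Field F] (u s z : F) : F :=
  (z * (z - 1 - u)) * (z * (z - 1 + u)) * (z ^ 2 - z + u ^ 2) * (-(1 + s) * (z + 1 - s))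

section Aux

variable {F : Type*} [Field F] [Fintype F] [DecidableEq F]

private lemma chi_sq_mul {b : F} (hb : b ≠ 0) (x : F) :
    quadraticChar F (b ^ 2 * x) = quadraticChar F x := by
  rw [map_mul, quadraticChar_sq_one' hb, one_mul]

private lemma chi_sum_sqMap (hF : ringChar F ≠ 2) (f : F → ℤ) :
    ∑ w : F, f (w ^ 2) = ∑ z : F, (quadraticChar F z + 1) * f z := by
  rw [← Finset.sum_fiberwise' univ (fun w : F => w ^ 2) f]
  refine Finset.sum_congr rfl fun z _ => ?_
  rw [Finset.sum_const, nsmul_eq_mul]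
  congr 1
  have h := quadraticChar_card_sqrts hF z
  rw [Set.toFinset_setOf] at h
  exact_mod_cast h

private lemma chi_sum_shift (hF : ringChar F ≠ 2) (c : F) :
    ∑ z : F, quadraticChar F (z + c) = 0 := by
  rw [← quadraticChar_sum_zero hF]
  exact Fintype.sum_equiv (Equiv.addRight c) _ _ (fun z => by simp)

private lemma chi_sum_mul_shift (hF : ringChar F ≠ 2) {c : F} (hc : c ≠ 0) :
    ∑ z : F, quadraticChar F z * quadraticChar F (z + c) = -1 := by
  have key : ∀ z : F, z ≠ 0 → quadraticChar F z * quadraticChar F (z + c)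
      = quadraticChar F (1 + c * z⁻¹) := by
    intro z hz
    rw [← map_mul]
    have hzz : z * (z + c) = z ^ 2 * (1 + c * z⁻¹) := by field_simp
    rw [hzz, chi_sq_mul hz]
  have h0 : ∑ z : F, quadraticChar F z * quadraticChar F (z + c)
      = ∑ z ∈ univ.erase (0 : F), quadraticChar F (1 + c * z⁻¹) := by
    rw [← Finset.sum_erase_add _ _ (mem_univ (0 : F)), quadraticChar_zero, zero_mul, add_zero]
    exact Finset.sum_congr rfl fun z hz => key z (Finset.ne_of_mem_erase hz)
  rw [h0]
  have h1 : ∑ z ∈ univ.erase (0 : F), quadraticChar F (1 + c * z⁻¹)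
      = ∑ t ∈ univ.erase (1 : F), quadraticChar F t := by
    refine Finset.sum_nbij' (fun z => 1 + c * z⁻¹) (fun t => c * (t - 1)⁻¹) ?_ ?_ ?_ ?_ ?_
    · intro z hz
      have hz0 : z ≠ 0 := Finset.ne_of_mem_erase hz
      have hne : c * z⁻¹ ≠ 0 := mul_ne_zero hc (inv_ne_zero hz0)
      simp only [mem_erase, mem_univ, and_true]
      intro h
      exact hne (by linear_combination h)
    · intro t ht
      have ht1 : t - 1 ≠ 0 := sub_ne_zero.mpr (Finset.ne_of_mem_erase ht)
      simp only [mem_erase, mem_univ, and_true]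
      exact mul_ne_zero hc (inv_ne_zero ht1)
    · intro z hz
      have hz0 : z ≠ 0 := Finset.ne_of_mem_erase hz
      field_simp
      rw [add_sub_cancel_left, div_self hc]
    · intro t ht
      have ht1 : t - 1 ≠ 0 := sub_ne_zero.mpr (Finset.ne_of_mem_erase ht)
      field_simp
      ring
    · intro z _; rfl
  rw [h1]
  have h2 := quadraticChar_sum_zero hF
  rw [← Finset.sum_erase_add _ _ (mem_univ (1 : F)), map_one] at h2
  omega

private lemma chi_sum_sq_add (hF : ringChar F ≠ 2) {c : F} (hc : c ≠ 0) :
    ∑ v : F, quadraticChar F (v ^ 2 + c) = -1 := by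
  calc ∑ v : F, quadraticChar F (v ^ 2 + c)
      = ∑ z : F, (quadraticChar F z + 1) * quadraticChar F (z + c) :=
        chi_sum_sqMap hF (fun z => quadraticChar F (z + c))
    _ = ∑ z : F, (quadraticChar F z * quadraticChar F (z + c) + quadraticChar F (z + c)) :=
        Finset.sum_congr rfl fun z _ => by ring
    _ = -1 := by
        rw [Finset.sum_add_distrib, chi_sum_mul_shift hF hc, chi_sum_shift hF c]
        norm_num

private lemma lemG (hF : ringChar F ≠ 2) (h3 : (3 : F) = 0) (hm1 : ¬ IsSquare (-1 : F))
    {α β : F} (hα : α ≠ 0) (hβ : β ≠ 0) (hαβ : α + β ≠ 0) :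
    ∑ W : F, quadraticChar F ((W ^ 2 + α ^ 2) * (W ^ 2 + β ^ 2) * (W ^ 2 + (α + β) ^ 2)) = -1 := by
  have key : ∀ W : F, (W ^ 2 + α ^ 2) * (W ^ 2 + β ^ 2) * (W ^ 2 + (α + β) ^ 2)
      = (W ^ 3 + (α ^ 2 + α * β + β ^ 2) * W) ^ 2 + (α * β * (α + β)) ^ 2 := fun W => by ring
  have hQ : Function.Injective (fun x : F => x ^ 3 + (α ^ 2 + α * β + β ^ 2) * x) := by
    intro x y hxy
    simp only at hxy
    have hfac : (x - y) * ((x - y) ^ 2 + (α - β) ^ 2) = 0 := by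
      linear_combination hxy - ((x - y) * (x * y + α * β)) * h3
    rcases mul_eq_zero.mp hfac with h | h
    · exact sub_eq_zero.mp h
    · by_contra hne
      have hxy0 : x - y ≠ 0 := sub_ne_zero.mpr hne
      have h' : (α - β) ^ 2 = -((x - y) ^ 2) := by linear_combination h
      have hsq : ((α - β) * (x - y)⁻¹) ^ 2 = -1 := by
        rw [mul_pow, h']
        field_simp
      exact hm1 ⟨(α - β) * (x - y)⁻¹, by rw [← hsq]; ring⟩
  have hM : (α * β * (α + β)) ^ 2 ≠ 0 :=
    pow_ne_zero _ (mul_ne_zero (mul_ne_zero hα hβ) hαβ)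
  calc ∑ W : F, quadraticChar F ((W ^ 2 + α ^ 2) * (W ^ 2 + β ^ 2) * (W ^ 2 + (α + β) ^ 2))
      = ∑ W : F, quadraticChar F
          ((W ^ 3 + (α ^ 2 + α * β + β ^ 2) * W) ^ 2 + (α * β * (α + β)) ^ 2) :=
        Finset.sum_congr rfl fun W _ => by rw [key W]
    _ = ∑ v : F, quadraticChar F (v ^ 2 + (α * β * (α + β)) ^ 2) :=
        Fintype.sum_bijective _ (Finite.injective_iff_bijective.mp hQ) _ _ (fun x => rfl)
    _ = -1 := chi_sum_sq_add hF hM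

private lemma pointwise (h3 : (3 : F) = 0) (hm1 : ¬ IsSquare (-1 : F))
    (hchin1 : quadraticChar F (-1 : F) = -1)
    {u s : F} (hs : s ^ 2 = 1 - u ^ 2) (ha : (1 : F) + u ≠ 0)
    (hd0 : (1 : F) + u + s ≠ 0) (hd2 : ((1 : F) + u + s) ^ 2 = -((1 + u) * (1 + s)))
    {w : F} (hw : w ≠ 0) :
    quadraticChar F (Ee u s (-(1 + u) * w ^ 2))
      = - quadraticChar F ((((1 + u) * w) ^ 2 + (1 + u) ^ 2) * (((1 + u) * w) ^ 2 + s ^ 2) *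
          (((1 + u) * w) ^ 2 + (1 + u + s) ^ 2)) := by
  set z : F := -(1 + u) * w ^ 2 with hz
  have hz0 : z ≠ 0 := mul_ne_zero (neg_ne_zero.mpr ha) (pow_ne_zero _ hw)
  have hfac : z + 1 - s ≠ 0 := by
    intro hq0
    have hq : (1 + u) * w ^ 2 = 1 - s := by rw [hz] at hq0; linear_combination -hq0
    have hWd : ((1 + u) * u) ^ 2 = -((1 + u) * w * (1 + u + s)) ^ 2 := by
      linear_combination ((1 + u) ^ 2 * w ^ 2) * hd2 - ((1 + u) ^ 2 * (1 + s)) * hq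
        + (1 + u) ^ 2 * hs
    have hden : (1 + u) * w * (1 + u + s) ≠ 0 := mul_ne_zero (mul_ne_zero ha hw) hd0
    apply hm1
    refine ⟨(1 + u) * u * ((1 + u) * w * (1 + u + s))⁻¹, ?_⟩
    have hh : ((1 + u) * u * ((1 + u) * w * (1 + u + s))⁻¹) *
        ((1 + u) * u * ((1 + u) * w * (1 + u + s))⁻¹)
        = ((1 + u) * u) ^ 2 * (((1 + u) * w * (1 + u + s))⁻¹) ^ 2 := by ring
    rw [hh, hWd]
    field_simp
  have e1 : Ee u s z = -(1 + s) * ((z * (z + 1 - s)) ^ 2 *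
      ((z - 1 - u) * ((z - 1 + u) * (z + 1 + s)))) := by
    simp only [Ee]
    linear_combination (z ^ 2 * (z - 1 - u) * (z - 1 + u) * (-(1 + s)) * (z + 1 - s)) * hs
      - (z ^ 2 * (z - 1 - u) * (z - 1 + u) * (-(1 + s)) * (z + 1 - s) * z) * h3
  have m1 : (1 + u) * (z - 1 - u) = -(((1 + u) * w) ^ 2 + (1 + u) ^ 2) := by rw [hz]; ring
  have m2 : (1 + u) * (z - 1 + u) = -(((1 + u) * w) ^ 2 + s ^ 2) := by
    rw [hz]; linear_combination hs
  have m3 : (1 + u) ^ 2 * (z + 1 + s) = -((1 + u) * (((1 + u) * w) ^ 2 + (1 + u + s) ^ 2)) := by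
    rw [hz]; linear_combination (1 + u) * hd2
  have hsq1 : quadraticChar F ((z * (z + 1 - s)) ^ 2) = 1 :=
    quadraticChar_sq_one' (mul_ne_zero hz0 hfac)
  have h5 : ((1 + u) ^ 2) ^ 2 * ((z - 1 - u) * ((z - 1 + u) * (z + 1 + s)))
      = ((1 + u) * (z - 1 - u)) * (((1 + u) * (z - 1 + u)) * ((1 + u) ^ 2 * (z + 1 + s))) := by
    ring
  have h7 : quadraticChar F (-(1 + s)) * quadraticChar F (-(1 + u)) = -1 := by
    rw [← map_mul]
    have hh : (-(1 + s)) * (-(1 + u)) = -1 * (1 + u + s) ^ 2 := by linear_combination hd2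
    rw [hh, map_mul, hchin1, quadraticChar_sq_one' hd0, mul_one]
  calc quadraticChar F (Ee u s z)
      = quadraticChar F (-(1 + s)) * (quadraticChar F ((z * (z + 1 - s)) ^ 2) *
          quadraticChar F ((z - 1 - u) * ((z - 1 + u) * (z + 1 + s)))) := by
        rw [e1, map_mul, map_mul]
    _ = quadraticChar F (-(1 + s)) *
          quadraticChar F ((z - 1 - u) * ((z - 1 + u) * (z + 1 + s))) := by
        rw [hsq1, one_mul]
    _ = quadraticChar F (-(1 + s)) * quadraticChar F (((1 + u) * (z - 1 - u)) *
          (((1 + u) * (z - 1 + u)) * ((1 + u) ^ 2 * (z + 1 + s)))) := by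
        rw [← chi_sq_mul (pow_ne_zero 2 ha) ((z - 1 - u) * ((z - 1 + u) * (z + 1 + s))), h5]
    _ = quadraticChar F (-(1 + s)) * quadraticChar F
          ((-(((1 + u) * w) ^ 2 + (1 + u) ^ 2)) * ((-(((1 + u) * w) ^ 2 + s ^ 2)) *
            (-((1 + u) * (((1 + u) * w) ^ 2 + (1 + u + s) ^ 2))))) := by
        rw [m1, m2, m3]
    _ = quadraticChar F (-(1 + s)) * quadraticChar F ((-(1 + u)) *
          ((((1 + u) * w) ^ 2 + (1 + u) ^ 2) * (((1 + u) * w) ^ 2 + s ^ 2) *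
            (((1 + u) * w) ^ 2 + (1 + u + s) ^ 2))) := by
        congr 1
        ring
    _ = (quadraticChar F (-(1 + s)) * quadraticChar F (-(1 + u))) *
          quadraticChar F ((((1 + u) * w) ^ 2 + (1 + u) ^ 2) * (((1 + u) * w) ^ 2 + s ^ 2) *
            (((1 + u) * w) ^ 2 + (1 + u + s) ^ 2)) := by
        rw [map_mul]; ring
    _ = - quadraticChar F ((((1 + u) * w) ^ 2 + (1 + u) ^ 2) * (((1 + u) * w) ^ 2 + s ^ 2) *
          (((1 + u) * w) ^ 2 + (1 + u + s) ^ 2)) := by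
        rw [h7]; ring

end Aux

theorem stmt_14 (n : ℕ) (hn : 3 ≤ n) (hodd : Odd n)
    (F : Type*) [Field F] [Fintype F] [DecidableEq F]
    (hcard : Fintype.card F = 3 ^ n)
    (u : F) (hu : u ^ 3 ≠ u)
    (huu : quadraticChar F (u + 1) ≠ quadraticChar F (u - 1))
    (s : F) (hs : s ^ 2 = 1 - u ^ 2) :
    (∑ z : F, quadraticChar F
        ((z * (z - 1 - u)) * (z * (z - 1 + u)) * (z ^ 2 - z + u ^ 2) *
          (-(1 + s) * (z + 1 - s)))) +
      (∑ z : F, quadraticChar F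
        ((-(u + 1) * z) * (z * (z - 1 - u)) * (z * (z - 1 + u)) *
          (z ^ 2 - z + u ^ 2) * (-(1 + s) * (z + 1 - s)))) = 2 := by
  classical
  -- characteristic facts
  have h3 : (3 : F) = 0 := by
    have h := FiniteField.cast_card_eq_zero F
    rw [hcard] at h
    push_cast at h
    exact pow_eq_zero_iff (by omega) |>.mp h
  have hF2 : ringChar F ≠ 2 := by
    intro h2
    have h2' : (2 : F) = 0 := by
      have hrc := ringChar.Nat.cast_ringChar (R := F)
      rw [h2] at hrc
      exact_mod_cast hrc
    have h1 : (1 : F) = 0 := by linear_combination h3 - h2'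
    exact one_ne_zero h1
  have hcard4 : Fintype.card F % 4 = 3 := by
    obtain ⟨k, hk⟩ := hodd
    rw [hcard, hk]
    have h9 : ∀ m : ℕ, (9 : ℕ) ^ m % 4 = 1 := by
      intro m
      induction m with
      | zero => rfl
      | succ m ih => rw [pow_succ, Nat.mul_mod, ih]
    have hpow : (3 : ℕ) ^ (2 * k + 1) = 9 ^ k * 3 := by
      rw [pow_succ, pow_mul]; norm_num
    rw [hpow, Nat.mul_mod, h9 k]
  have hm1 : ¬ IsSquare (-1 : F) := by
    rw [FiniteField.isSquare_neg_one_iff]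
    simp only [ne_eq, not_not]
    exact hcard4
  have hchin1 : quadraticChar F (-1 : F) = -1 :=
    quadraticChar_neg_one_iff_not_isSquare.mpr hm1
  -- nondegeneracy facts
  have hu0 : u ≠ 0 := fun h => hu (by rw [h]; ring)
  have hu1 : u ≠ 1 := fun h => hu (by rw [h]; ring)
  have hum1 : u ≠ -1 := fun h => hu (by rw [h]; ring)
  have ha : (1 : F) + u ≠ 0 := fun h => hum1 (by linear_combination h)
  have hb : (1 : F) - u ≠ 0 := fun h => hu1 (by linear_combination -h)
  have hs0 : s ≠ 0 := by
    intro h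
    have h0 : (1 - u) * (1 + u) = 0 := by linear_combination -hs + s * h
    rcases mul_eq_zero.mp h0 with h' | h'
    · exact hb h'
    · exact ha h'
  have hd2 : ((1 : F) + u + s) ^ 2 = -((1 + u) * (1 + s)) := by
    linear_combination hs + (1 + u + s + u * s) * h3
  have hs1 : (1 : F) + s ≠ 0 := by
    intro h
    have h0 : u * u = 0 := by linear_combination hs - (s - 1) * h
    exact hu0 (mul_self_eq_zero.mp h0)
  have hd0 : (1 : F) + u + s ≠ 0 := by
    intro h
    have h0 : (1 + u) * (1 + s) = 0 := by linear_combination hd2 - (1 + u + s) * h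
    rcases mul_eq_zero.mp h0 with h' | h'
    · exact ha h'
    · exact hs1 h'
  have hna : -((1 : F) + u) ≠ 0 := neg_ne_zero.mpr ha
  -- Step A: split χ of the second sum
  have step0 : ∀ z : F, quadraticChar F
      ((-(u + 1) * z) * (z * (z - 1 - u)) * (z * (z - 1 + u)) *
        (z ^ 2 - z + u ^ 2) * (-(1 + s) * (z + 1 - s)))
      = quadraticChar F (-(u + 1) * z) * quadraticChar F (Ee u s z) := by
    intro z
    rw [← map_mul]
    congr 1
    simp only [Ee]
    ring
  have step1 : ∀ z : F, quadraticChar F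
      ((z * (z - 1 - u)) * (z * (z - 1 + u)) * (z ^ 2 - z + u ^ 2) *
        (-(1 + s) * (z + 1 - s))) = quadraticChar F (Ee u s z) := fun z => rfl
  simp only [step0, step1]
  rw [← Finset.sum_add_distrib]
  have step2 : ∀ z : F, quadraticChar F (Ee u s z) +
      quadraticChar F (-(u + 1) * z) * quadraticChar F (Ee u s z)
      = (quadraticChar F (-(u + 1) * z) + 1) * quadraticChar F (Ee u s z) := fun z => by ring
  simp only [step2]
  -- Step B: reindex z ↦ -(1+u) z
  have step3 : ∑ z : F, (quadraticChar F (-(u + 1) * z) + 1) * quadraticChar F (Ee u s z)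
      = ∑ z : F, (quadraticChar F z + 1) * quadraticChar F (Ee u s (-(1 + u) * z)) := by
    refine (Fintype.sum_equiv (Equiv.mulLeft₀ (-(1 + u)) hna)
      (fun z => (quadraticChar F z + 1) * quadraticChar F (Ee u s (-(1 + u) * z)))
      (fun z => (quadraticChar F (-(u + 1) * z) + 1) * quadraticChar F (Ee u s z))
      (fun x => ?_)).symm
    simp only [Equiv.mulLeft₀_apply]
    have hx : -(u + 1) * (-(1 + u) * x) = (1 + u) ^ 2 * x := by ring
    rw [hx, chi_sq_mul ha]
  rw [step3]
  have step4 : ∑ z : F, (quadraticChar F z + 1) * quadraticChar F (Ee u s (-(1 + u) * z))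
      = ∑ w : F, quadraticChar F (Ee u s (-(1 + u) * w ^ 2)) :=
    (chi_sum_sqMap hF2 (fun z => quadraticChar F (Ee u s (-(1 + u) * z)))).symm
  rw [step4]
  -- Step C: split off w = 0 and apply the pointwise identity
  rw [← Finset.sum_erase_add univ _ (mem_univ (0 : F))]
  have hE0 : quadraticChar F (Ee u s (-(1 + u) * (0 : F) ^ 2)) = 0 := by
    have h0 : Ee u s (-(1 + u) * (0 : F) ^ 2) = 0 := by simp only [Ee]; ring
    rw [h0, quadraticChar_zero]
  rw [hE0, add_zero]
  have step5 : ∑ w ∈ univ.erase (0 : F), quadraticChar F (Ee u s (-(1 + u) * w ^ 2))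
      = ∑ w ∈ univ.erase (0 : F), - quadraticChar F
          ((((1 + u) * w) ^ 2 + (1 + u) ^ 2) * (((1 + u) * w) ^ 2 + s ^ 2) *
            (((1 + u) * w) ^ 2 + (1 + u + s) ^ 2)) :=
    Finset.sum_congr rfl fun w hw =>
      pointwise h3 hm1 hchin1 hs ha hd0 hd2 (Finset.ne_of_mem_erase hw)
  rw [step5, Finset.sum_neg_distrib]
  have step6 : ∑ w ∈ univ.erase (0 : F), quadraticChar F
      ((((1 + u) * w) ^ 2 + (1 + u) ^ 2) * (((1 + u) * w) ^ 2 + s ^ 2) *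
        (((1 + u) * w) ^ 2 + (1 + u + s) ^ 2))
      = (∑ w : F, quadraticChar F
          ((((1 + u) * w) ^ 2 + (1 + u) ^ 2) * (((1 + u) * w) ^ 2 + s ^ 2) *
            (((1 + u) * w) ^ 2 + (1 + u + s) ^ 2)))
        - quadraticChar F
            ((((1 + u) * (0 : F)) ^ 2 + (1 + u) ^ 2) * (((1 + u) * (0 : F)) ^ 2 + s ^ 2) *
              (((1 + u) * (0 : F)) ^ 2 + (1 + u + s) ^ 2)) := by
    rw [← Finset.sum_erase_add univ _ (mem_univ (0 : F))]
    ring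
  rw [step6]
  have step7 : ∑ w : F, quadraticChar F
      ((((1 + u) * w) ^ 2 + (1 + u) ^ 2) * (((1 + u) * w) ^ 2 + s ^ 2) *
        (((1 + u) * w) ^ 2 + (1 + u + s) ^ 2))
      = ∑ W : F, quadraticChar F
          ((W ^ 2 + (1 + u) ^ 2) * (W ^ 2 + s ^ 2) * (W ^ 2 + (1 + u + s) ^ 2)) := by
    refine Fintype.sum_equiv (Equiv.mulLeft₀ ((1 : F) + u) ha) _ _ (fun x => ?_)
    simp only [Equiv.mulLeft₀_apply]
  rw [step7, lemG hF2 h3 hm1 ha hs0 hd0]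
  have step8 : quadraticChar F
      ((((1 + u) * (0 : F)) ^ 2 + (1 + u) ^ 2) * (((1 + u) * (0 : F)) ^ 2 + s ^ 2) *
        (((1 + u) * (0 : F)) ^ 2 + (1 + u + s) ^ 2)) = 1 := by
    have h0 : (((1 + u) * (0 : F)) ^ 2 + (1 + u) ^ 2) * (((1 + u) * (0 : F)) ^ 2 + s ^ 2) *
        (((1 + u) * (0 : F)) ^ 2 + (1 + u + s) ^ 2) = ((1 + u) * s * (1 + u + s)) ^ 2 := by
      ring
    rw [h0]
    exact quadraticChar_sq_one' (mul_ne_zero (mul_ne_zero ha hs0) hd0)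
  rw [step8]
  norm_num
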